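/- arXiv:2410.11775 — 2 statements merged into one kernel-verified Lean document; each statement's English description precedes it below -/
import Mathlib

section
/- Fix Δ ∈ ℕ⁺ and let τ = {E} ⊆ σ with σ finite relational; all trees considered have height at most Δ. Let p(x̄,ȳ) be a closure type over τ. Then there is a number d ∈ ℕ, depending only on p, such that for every tree T and all ā ∈ T^{|x̄|}, b̄ ∈ T^{|ȳ|} with T ⊨ p(ā,b̄), one has |cl_T(b̄) ∖ cl_T(ā)| = d; that is, the ȳ-rank of p is well defined. -/
open Classical Filter
noncomputable section

namespace PaperTrees

/-! ### Trees -/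

section Trees
variable {A : Type*} {B : Type*}

/-- Level `l` of an edge relation: level 0 = elements with no incoming edge (roots),
level `l+1` = children of level-`l` elements. -/
def Level (E : A → A → Prop) : ℕ → A → Prop
  | 0 => fun a => ∀ x, ¬ E x a
  | (l+1) => fun a => ∃ b, Level E l b ∧ E b a

def IsRoot (E : A → A → Prop) (a : A) : Prop := ∀ x, ¬ E x a

def IsLeaf (E : A → A → Prop) (a : A) : Prop := ∀ x, ¬ E a x

/-- A tree: `E b a` means `b` is the parent of `a`. -/
structure IsTree (E : A → A → Prop) : Prop where
  asymm : ∀ a b, E a b → a ≠ b ∧ ¬ E b a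
  root_unique : ∃! r, IsRoot E r
  parent_unique : ∀ a, ¬ IsRoot E a → ∃! b, E b a
  acyclic : ∀ a, ¬ Relation.TransGen E a a

def HeightLe (E : A → A → Prop) (h : ℕ) : Prop := ∀ l a, Level E l a → l ≤ h

def HasHeight (E : A → A → Prop) (h : ℕ) : Prop := (∃ a, Level E h a) ∧ HeightLe E h

/-- `a` is an ancestor of `b`: there is a directed path from `a` to `b`. -/
def Ancestor (E : A → A → Prop) (a b : A) : Prop := Relation.TransGen E a b

/-- The closure of a set in a tree: the set together with the root and all
ancestors of its members. -/
def treeCl (E : A → A → Prop) (S : Set A) : Set A :=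
  {a | a ∈ S ∨ IsRoot E a ∨ ∃ b ∈ S, Ancestor E a b}

def IsClosedSet (E : A → A → Prop) (S : Set A) : Prop := treeCl E S = S

def Sibling (E : A → A → Prop) (a b : A) : Prop := a ≠ b ∧ ∃ c, E c a ∧ E c b

def childSet (E : A → A → Prop) (a : A) : Set A := {x | E a x}

/-- The relation induced on a subset (induced substructure). -/
def InducedRel (E : A → A → Prop) (S : Set A) : S → S → Prop := fun x y => E x y

/-- Isomorphism of binary relational structures. -/
def RelIso' (E : A → A → Prop) (E' : B → B → Prop) : Prop :=
  ∃ f : A ≃ B, ∀ x y, E x y ↔ E' (f x) (f y)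

/-- `S` carries a subtree of `(A,E)` rooted at `a`. -/
def IsSubtreeRootedAt (E : A → A → Prop) (S : Set A) (a : A) : Prop :=
  (∃ h : a ∈ S, IsRoot (InducedRel E S) ⟨a, h⟩) ∧ IsTree (InducedRel E S)

/-- `NT E E' a`: the number of subtrees of `(A,E)` rooted at `a` and isomorphic to `(B,E')`. -/
def NT (E : A → A → Prop) (E' : B → B → Prop) (a : A) : ℕ :=
  Set.ncard {S : Set A | IsSubtreeRootedAt E S a ∧ RelIso' (InducedRel E S) E'}

end Trees

/-! ### PLA*: syntax and semantics -/

/-- A (finite) σ-structure on domain `A`: a Bool-valued interpretation of every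
relation symbol. -/
abbrev Struc (σ : Type) (ar : σ → ℕ) (A : Type) : Type := ∀ R : σ, (Fin (ar R) → A) → Bool

/-- Formulas of `PLA*(σ)` with variables in `ℕ`.  Connectives are continuous
functions `[0,1]^k → [0,1]`; aggregation functions are functions
`([0,1]^{<ω})^k → [0,1]` invariant under reordering of the entries of each
sequence; an aggregation node binds the (distinct) variables of `ys`. -/
inductive PLA (σ : Type) (ar : σ → ℕ) : Type where
  | const : unitInterval → PLA σ ar
  | eqf : ℕ → ℕ → PLA σ ar
  | rel : (R : σ) → (Fin (ar R) → ℕ) → PLA σ ar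
  | conn : (k : ℕ) → (C : (Fin k → unitInterval) → unitInterval) → Continuous C →
      (Fin k → PLA σ ar) → PLA σ ar
  | agg : (k : ℕ) → (F : (Fin k → List unitInterval) → unitInterval) →
      (∀ p q : Fin k → List unitInterval, (∀ i, List.Perm (p i) (q i)) → F p = F q) →
      (ys : List ℕ) → ys.Nodup → (Fin k → PLA σ ar) → (Fin k → PLA σ ar) → PLA σ ar

/-- Update an assignment on the variables of the list `ys` by the tuple `b`. -/
def updMany {A : Type} (β : ℕ → A) (ys : List ℕ) (b : Fin ys.length → A) : ℕ → A :=
  fun v => if h : v ∈ ys then b ⟨ys.idxOf v, List.idxOf_lt_length_iff.mpr h⟩ else β v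

/-- The value `A(φ(ā)) ∈ [0,1]` of a `PLA*`-formula in a finite structure under an
assignment. -/
def eval {σ : Type} {ar : σ → ℕ} {A : Type} [Fintype A] (S : Struc σ ar A) :
    PLA σ ar → (ℕ → A) → unitInterval
  | .const c, _ => c
  | .eqf u v, β => if β u = β v then 1 else 0
  | .rel R t, β => if S R (fun i => β (t i)) then 1 else 0
  | .conn _ C _ f, β => C fun i => eval S (f i) β
  | .agg k F _ ys _ φs χs, β =>
      let L : List (Fin ys.length → A) := (Finset.univ : Finset (Fin ys.length → A)).toList
      let vals : Fin k → List unitInterval := fun i =>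
        (L.filter fun b => decide (eval S (χs i) (updMany β ys b) = 1)).map
          fun b => eval S (φs i) (updMany β ys b)
      if ∀ i, vals i ≠ [] then F vals else 0

/-- Free variables (aggregation binds the variables of `ys`). -/
def freeVars {σ : Type} {ar : σ → ℕ} : PLA σ ar → Set ℕ
  | .const _ => ∅
  | .eqf u v => {u, v}
  | .rel _ t => Set.range t
  | .conn _ _ _ f => ⋃ i, freeVars (f i)
  | .agg _ _ _ ys _ φs χs =>
      (((⋃ i, freeVars (φs i)) ∪ ⋃ i, freeVars (χs i)) \ {v | v ∈ ys})

/-- The relation symbols occurring in a formula. -/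
def symbols {σ : Type} {ar : σ → ℕ} : PLA σ ar → Set σ
  | .const _ => ∅
  | .eqf _ _ => ∅
  | .rel R _ => {R}
  | .conn _ _ _ f => ⋃ i, symbols (f i)
  | .agg _ _ _ _ _ φs χs => (⋃ i, symbols (φs i)) ∪ ⋃ i, symbols (χs i)

/-- No aggregation function occurs in the formula. -/
def AggFree {σ : Type} {ar : σ → ℕ} : PLA σ ar → Prop
  | .const _ => True
  | .eqf _ _ => True
  | .rel _ _ => True
  | .conn _ _ _ f => ∀ i, AggFree (f i)
  | .agg _ _ _ _ _ _ _ => False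

/-- `AggOK P φ` holds iff every aggregation subformula
`F(φ₁,…,φ_k : z̄ : χ₁,…,χ_k)` of `φ` satisfies `P k F (χ₁,…,χ_k) z̄`. -/
def AggOK {σ : Type} {ar : σ → ℕ}
    (P : ∀ k : ℕ, ((Fin k → List unitInterval) → unitInterval) → (Fin k → PLA σ ar) → List ℕ → Prop) :
    PLA σ ar → Prop
  | .const _ => True
  | .eqf _ _ => True
  | .rel _ _ => True
  | .conn _ _ _ f => ∀ i, AggOK P (f i)
  | .agg k F _ ys _ φs χs => P k F χs ys ∧ (∀ i, AggOK P (φs i)) ∧ ∀ i, AggOK P (χs i)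

section Signature

variable {σ : Type} {ar : σ → ℕ}

/-- `S` interprets the symbol `e` exactly as the binary relation `E0`. -/
def IsExpansionOf (e : σ) (hE : ar e = 2) {A : Type} (E0 : A → A → Prop) (S : Struc σ ar A) : Prop :=
  ∀ t : Fin (ar e) → A, S e t = true ↔ E0 (t (Fin.cast hE.symm 0)) (t (Fin.cast hE.symm 1))

/-- `S` expands some tree of height at most `Δ`. -/
def ExpandsTreeLe (e : σ) (hE : ar e = 2) (Δ : ℕ) {A : Type} (S : Struc σ ar A) : Prop :=
  ∃ E0 : A → A → Prop, IsTree E0 ∧ HeightLe E0 Δ ∧ IsExpansionOf e hE E0 S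

/-- The canonical expansion of a tree interpreting every other relation symbol as empty;
used to express satisfaction of τ-formulas in the tree itself. -/
def tauStruc [DecidableEq σ] (e : σ) (hE : ar e = 2) {A : Type} (E0 : A → A → Prop) :
    Struc σ ar A :=
  fun R t =>
    if h : R = e then
      decide (E0 (t (Fin.cast (show (2:ℕ) = ar R by rw [h, hE]) 0))
        (t (Fin.cast (show (2:ℕ) = ar R by rw [h, hE]) 1)))
    else false

/-! ### Atomic types and closure types -/

/-- Data of a conjunction of σ-literals in `n` variables: the literals asserted
positively and those asserted negatively. -/
structure AtomicTypeData (σ : Type) (ar : σ → ℕ) (n : ℕ) : Type where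
  pos : Set ((R : σ) × (Fin (ar R) → Fin n))
  neg : Set ((R : σ) × (Fin (ar R) → Fin n))

/-- Satisfaction of an atomic type (which includes the inequalities `xᵢ ≠ xⱼ`). -/
def satAtomic {n : ℕ} {A : Type} (S : Struc σ ar A) (φ : AtomicTypeData σ ar n)
    (t : Fin n → A) : Prop :=
  (∀ l ∈ φ.pos, S l.1 (fun i => t (l.2 i)) = true) ∧
  (∀ l ∈ φ.neg, S l.1 (fun i => t (l.2 i)) = false) ∧ Function.Injective t

/-- The `E`-literal on the pair of variables `(i, j)`. -/
def pairTup (e : σ) {n : ℕ} (i j : Fin n) : Fin (ar e) → Fin n :=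
  fun s => if (s : ℕ) = 0 then i else j

/-- An atomic type over σ (with respect to trees of height at most Δ): it decides all
`E`-literals, contains all inequalities (built into `satAtomic`), and is satisfiable in
some expansion of some tree of height at most `Δ`. -/
def IsAtomicType (e : σ) (hE : ar e = 2) (Δ : ℕ) {n : ℕ} (φ : AtomicTypeData σ ar n) : Prop :=
  (∀ i j : Fin n, (⟨e, pairTup e i j⟩ ∈ φ.pos ∨ ⟨e, pairTup e i j⟩ ∈ φ.neg)) ∧
  ∃ (A : Type) (_ : Fintype A) (S : Struc σ ar A) (t : Fin n → A),
    ExpandsTreeLe e hE Δ S ∧ satAtomic S φ t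

/-- A complete atomic type decides every literal. -/
def CompleteAtomic {n : ℕ} (φ : AtomicTypeData σ ar n) : Prop :=
  ∀ (R : σ) (v : Fin (ar R) → Fin n), ⟨R, v⟩ ∈ φ.pos ∨ ⟨R, v⟩ ∈ φ.neg

/-- An atomic type over τ = {E} uses only `E`-literals. -/
def TauAtomic (e : σ) {n : ℕ} (φ : AtomicTypeData σ ar n) : Prop :=
  (∀ l ∈ φ.pos, l.1 = e) ∧ ∀ l ∈ φ.neg, l.1 = e

/-- The tuple of values of an assignment on a list of variables. -/
def xtuple {A : Type} (β : ℕ → A) (xs : List ℕ) : Fin xs.length → A := fun i => β (xs.get i)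

/-- `p` (a 0/1-valued formula with free variables among `xs`) is, on all σ-structures
expanding trees of height at most `Δ`, equivalent to
`∃ w̄ (φ(x̄,w̄) ∧ "x̄w̄ is closed")` where `φ` is an atomic type implying that each `wᵢ`
lies in the closure of `x̄`. -/
def IsClosureTypeData (e : σ) (hE : ar e = 2) (Δ : ℕ) (p : PLA σ ar) (xs : List ℕ)
    (m : ℕ) (φ : AtomicTypeData σ ar (xs.length + m)) : Prop :=
  IsAtomicType e hE Δ φ ∧
  (∀ (A : Type) (_ : Fintype A) (S : Struc σ ar A) (E0 : A → A → Prop),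
     IsTree E0 → HeightLe E0 Δ → IsExpansionOf e hE E0 S →
     ∀ t : Fin (xs.length + m) → A, satAtomic S φ t →
       ∀ i : Fin m, t (Fin.natAdd xs.length i) ∈
         treeCl E0 (Set.range fun j : Fin xs.length => t (Fin.castAdd m j))) ∧
  (∀ (A : Type) (_ : Fintype A) (S : Struc σ ar A) (E0 : A → A → Prop),
     IsTree E0 → HeightLe E0 Δ → IsExpansionOf e hE E0 S →
     ∀ β : ℕ → A,
       (eval S p β = 1 ∨ eval S p β = 0) ∧
       (eval S p β = 1 ↔ ∃ w : Fin m → A,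
          satAtomic S φ (Fin.append (xtuple β xs) w) ∧
          IsClosedSet E0 (Set.range (Fin.append (xtuple β xs) w))))

/-- A closure type over σ, in the (distinct) free variables `xs`. -/
def IsClosureType (e : σ) (hE : ar e = 2) (Δ : ℕ) (p : PLA σ ar) (xs : List ℕ) : Prop :=
  xs.Nodup ∧ freeVars p ⊆ {v | v ∈ xs} ∧
  ∃ (m : ℕ) (φ : AtomicTypeData σ ar (xs.length + m)), IsClosureTypeData e hE Δ p xs m φ

/-- A complete closure type over σ. -/
def IsCompleteClosureType (e : σ) (hE : ar e = 2) (Δ : ℕ) (p : PLA σ ar) (xs : List ℕ) : Prop :=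
  xs.Nodup ∧ freeVars p ⊆ {v | v ∈ xs} ∧
  ∃ (m : ℕ) (φ : AtomicTypeData σ ar (xs.length + m)),
    IsClosureTypeData e hE Δ p xs m φ ∧ CompleteAtomic φ

/-- A closure type over τ = {E}. -/
def IsClosureTypeTau (e : σ) (hE : ar e = 2) (Δ : ℕ) (p : PLA σ ar) (xs : List ℕ) : Prop :=
  xs.Nodup ∧ freeVars p ⊆ {v | v ∈ xs} ∧ symbols p ⊆ {e} ∧
  ∃ (m : ℕ) (φ : AtomicTypeData σ ar (xs.length + m)),
    IsClosureTypeData e hE Δ p xs m φ ∧ TauAtomic e φ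

/-- Semantic implication on finite σ-structures expanding trees of height at most `Δ`. -/
def ImpOnTrees (e : σ) (hE : ar e = 2) (Δ : ℕ) (p q : PLA σ ar) : Prop :=
  ∀ (A : Type) (_ : Fintype A) (S : Struc σ ar A), ExpandsTreeLe e hE Δ S →
    ∀ β : ℕ → A, eval S p β = 1 → eval S q β = 1

/-- `q` is (up to equivalence) the restriction `p↾τ` of the closure type `p` to τ. -/
def IsTauRestriction (e : σ) (hE : ar e = 2) (Δ : ℕ) (p q : PLA σ ar) (xs : List ℕ) : Prop :=
  IsClosureTypeTau e hE Δ q xs ∧ ImpOnTrees e hE Δ p q ∧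
  ∀ q', IsClosureTypeTau e hE Δ q' xs → ImpOnTrees e hE Δ p q' → ImpOnTrees e hE Δ q q'

/-- The ȳ-rank of the closure type `p(x̄,ȳ)` is `r`: on any realization of `p↾τ` in a tree,
`|cl(b̄) ∖ cl(ā)| = r`. -/
def HasRank (e : σ) (hE : ar e = 2) (Δ : ℕ) (p : PLA σ ar) (xs ys : List ℕ) (r : ℕ) : Prop :=
  ∃ q, IsTauRestriction e hE Δ p q (xs ++ ys) ∧
    ∀ (A : Type) (_ : Fintype A) (S : Struc σ ar A) (E0 : A → A → Prop),
      IsTree E0 → HeightLe E0 Δ → IsExpansionOf e hE E0 S →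
      ∀ β : ℕ → A, eval S q β = 1 →
        (treeCl E0 (β '' {v | v ∈ ys}) \ treeCl E0 (β '' {v | v ∈ xs})).ncard = r

/-- Self-contained closure type: it implies that its variables form a closed set. -/
def SelfContained (e : σ) (hE : ar e = 2) (Δ : ℕ) (p : PLA σ ar) (xs : List ℕ) : Prop :=
  ∀ (A : Type) (_ : Fintype A) (S : Struc σ ar A) (E0 : A → A → Prop),
    IsTree E0 → HeightLe E0 Δ → IsExpansionOf e hE E0 S →
    ∀ β : ℕ → A, eval S p β = 1 → IsClosedSet E0 (β '' {v | v ∈ xs})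

/-- `ψ` is (on expansions of trees of height at most `Δ`) a closure-basic formula
`⋀ᵢ (pᵢ(x̄) → cᵢ)` where the `pᵢ` are complete closure types, `cᵢ ∈ [0,1]`, `∧ = min` and
`→` is the Łukasiewicz implication. -/
def IsClosureBasic (e : σ) (hE : ar e = 2) (Δ : ℕ) (ψ : PLA σ ar) (xs : List ℕ) : Prop :=
  ∃ (k : ℕ) (p : Fin (k+1) → PLA σ ar) (c : Fin (k+1) → ℝ),
    (∀ i, IsCompleteClosureType e hE Δ (p i) xs ∧ c i ∈ Set.Icc (0:ℝ) 1) ∧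
    ∀ (A : Type) (_ : Fintype A) (S : Struc σ ar A), ExpandsTreeLe e hE Δ S → ∀ β : ℕ → A,
      (eval S ψ β : ℝ) =
        Finset.univ.inf' Finset.univ_nonempty
          (fun i => min 1 (1 - (eval S (p i) β : ℝ) + c i))

end Signature

end PaperTrees
/-! ### Base sequences of trees -/

namespace PaperTrees

/-- Assumption 6.4 on the base sequence of trees. -/
structure TreeSeqAssumption (V : ℕ → Type) [∀ n, Fintype (V n)]
    (En : ∀ n, V n → V n → Prop) (Δ : ℕ) (g1 g2 g3 g4 : ℕ → ℝ) : Prop where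
  delta_pos : 0 < Δ
  g1_pos : ∀ n, 0 < g1 n
  g2_pos : ∀ n, 0 < g2 n
  g3_pos : ∀ n, 0 < g3 n
  g4_pos : ∀ n, 0 < g4 n
  g1_infty : Filter.Tendsto g1 Filter.atTop Filter.atTop
  g2_infty : Filter.Tendsto g2 Filter.atTop Filter.atTop
  g3_infty : Filter.Tendsto g3 Filter.atTop Filter.atTop
  g4_infty : Filter.Tendsto g4 Filter.atTop Filter.atTop
  g3_log : ∀ α : ℝ, Filter.Tendsto (fun n => g3 n - α * Real.log n) Filter.atTop Filter.atTop
  g1_g3 : Filter.Tendsto (fun n => g1 n - g3 n) Filter.atTop Filter.atTop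
  g2_over_g1 : Filter.Tendsto (fun n => g2 n / g1 n) Filter.atTop (nhds 0)
  g4_poly : ∃ P : Polynomial ℝ, ∀ n, g4 n = P.eval (n : ℝ)
  tree : ∀ n, IsTree (En n)
  height : ∀ n, HasHeight (En n) Δ
  leaves_level : ∀ n, ∀ a : V n, IsLeaf (En n) a → Level (En n) Δ a
  child_lb : ∀ n, ∀ a : V n, ¬ IsLeaf (En n) a → g1 n ≤ (Set.ncard (childSet (En n) a) : ℝ)
  child_ub : ∀ n, ∀ a : V n, ¬ IsLeaf (En n) a → (Set.ncard (childSet (En n) a) : ℝ) ≤ g4 n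
  siblings : ∀ (B : Type) [Fintype B] (E' : B → B → Prop), IsTree E' →
      (∃ h, 1 ≤ h ∧ HasHeight E' h) →
      ∀ᶠ n in Filter.atTop, ∀ a : V n, ¬ IsRoot (En n) a → 0 < NT (En n) E' a →
        g3 n ≤ (Set.ncard {b : V n | Sibling (En n) a b ∧
          (NT (En n) E' a : ℝ) - g2 n < (NT (En n) E' b : ℝ) ∧
          (NT (En n) E' b : ℝ) < (NT (En n) E' a : ℝ) + g2 n} : ℝ)

/-- The Light Assumption on the base sequence of trees. -/
structure TreeSeqLight (V : ℕ → Type) [∀ n, Fintype (V n)]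
    (En : ∀ n, V n → V n → Prop) (Δ : ℕ) (g1 g4 : ℕ → ℝ) : Prop where
  delta_pos : 0 < Δ
  g1_pos : ∀ n, 0 < g1 n
  g4_pos : ∀ n, 0 < g4 n
  g1_infty : Filter.Tendsto g1 Filter.atTop Filter.atTop
  g4_poly : ∃ P : Polynomial ℝ, ∀ n, g4 n = P.eval (n : ℝ)
  tree : ∀ n, IsTree (En n)
  height : ∀ n, HasHeight (En n) Δ
  leaves_level : ∀ n, ∀ a : V n, IsLeaf (En n) a → Level (En n) Δ a
  child_lb : ∀ n, ∀ a : V n, ¬ IsLeaf (En n) a → g1 n ≤ (Set.ncard (childSet (En n) a) : ℝ)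
  child_ub : ∀ n, ∀ a : V n, ¬ IsLeaf (En n) a → (Set.ncard (childSet (En n) a) : ℝ) ≤ g4 n

/-! ### PLA*-networks and the induced probability distributions -/

section Net
variable {σ : Type} {ar : σ → ℕ}

/-- A `PLA*(σ)`-network based on τ = {e}: a DAG on `σ ∖ {e}` together with a formula
`θ R ∈ PLA*(par(R) ∪ {e})` (with free variables among `x₁,…,x_{ar R}`) for every
`R ∈ σ ∖ {e}`. -/
structure PLANet (σ : Type) (ar : σ → ℕ) (e : σ) where
  prec : σ → σ → Prop
  acyclic : ∀ R, ¬ Relation.TransGen prec R R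
  edges_ne : ∀ R R', prec R R' → R ≠ e ∧ R' ≠ e
  θ : σ → PLA σ ar
  symbols_ok : ∀ R, R ≠ e → symbols (θ R) ⊆ {R' | prec R' R} ∪ {e}
  fv_ok : ∀ R, R ≠ e → freeVars (θ R) ⊆ {v | v < ar R}

/-- The assignment sending variable `i < k` to `t i`. -/
def tupAssign {A : Type} (ha : Nonempty A) {k : ℕ} (t : Fin k → A) : ℕ → A :=
  fun v => if h : v < k then t ⟨v, h⟩ else ha.some

/-- The probability which the network `N` assigns to the σ-structure `S` as an expansion of
the tree `(A, E0)`: the product, over all `R ∈ σ ∖ {e}` and all tuples `ā`, of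
`S(θ_R(ā))` if `R(ā)` holds and `1 - S(θ_R(ā))` otherwise.  (Since
`θ_R ∈ PLA*(par(R) ∪ τ)`, its value in `S` coincides with its value in the reduct of `S` to
the symbols of earlier levels of the DAG, so this agrees with the level-by-level
definition of the induced distribution.) -/
def netProb [Fintype σ] [DecidableEq σ] (e : σ) (hE : ar e = 2) (N : PLANet σ ar e)
    {A : Type} [Fintype A] [DecidableEq A] (ha : Nonempty A) (E0 : A → A → Prop)
    (S : Struc σ ar A) : ℝ :=
  if IsExpansionOf e hE E0 S then
    ∏ R : σ, if R = e then 1 else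
      ∏ t : Fin (ar R) → A,
        if S R t then (eval S (N.θ R) (tupAssign ha t) : ℝ)
        else 1 - (eval S (N.θ R) (tupAssign ha t) : ℝ)
  else 0

/-- The probability of a set of σ-structures under the distribution induced by the network. -/
def netPr [Fintype σ] [DecidableEq σ] (e : σ) (hE : ar e = 2) (N : PLANet σ ar e)
    {A : Type} [Fintype A] [DecidableEq A] (ha : Nonempty A) (E0 : A → A → Prop)
    (X : Set (Struc σ ar A)) : ℝ :=
  ∑ S : Struc σ ar A, if S ∈ X then netProb e hE N ha E0 S else 0

variable [Fintype σ] [DecidableEq σ]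
variable (V : ℕ → Type) [∀ n, Fintype (V n)] [∀ n, DecidableEq (V n)]
variable (En : ∀ n, V n → V n → Prop) (hne : ∀ n, Nonempty (V n))

/-- Asymptotic equivalence of two `PLA*(σ)`-formulas with respect to the sequence of
probability distributions induced by the network on the expansions of the trees `T_n`. -/
def AsympEquiv (e : σ) (hE : ar e = 2) (N : PLANet σ ar e) (φ ψ : PLA σ ar) : Prop :=
  ∀ ε : ℝ, 0 < ε →
    Filter.Tendsto (fun n => netPr e hE N (hne n) (En n)
        {S | IsExpansionOf e hE (En n) S ∧
          ∀ β : ℕ → V n, |(eval S φ β : ℝ) - (eval S ψ β : ℝ)| ≤ ε})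
      Filter.atTop (nhds 1)

/-- `(p, ptau, q)` is `(α, ε)`-balanced in `S` (with `ys` the aggregated variables). -/
def BalancedIn {A : Type} [Fintype A] (S : Struc σ ar A) (p ptau q : PLA σ ar)
    (ys : List ℕ) (α ε : ℝ) : Prop :=
  ∀ β : ℕ → A, eval S q β = 1 →
    (α - ε) * (({b : Fin ys.length → A | eval S ptau (updMany β ys b) = 1}).ncard : ℝ) ≤
      (({b : Fin ys.length → A | eval S p (updMany β ys b) = 1 ∧
          eval S ptau (updMany β ys b) = 1}).ncard : ℝ) ∧
    (({b : Fin ys.length → A | eval S p (updMany β ys b) = 1 ∧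
        eval S ptau (updMany β ys b) = 1}).ncard : ℝ) ≤
      (α + ε) * (({b : Fin ys.length → A | eval S ptau (updMany β ys b) = 1}).ncard : ℝ)

/-- `(p, ptau, q)` is `α`-balanced with respect to the network. -/
def Balanced (e : σ) (hE : ar e = 2) (N : PLANet σ ar e) (p ptau q : PLA σ ar)
    (ys : List ℕ) (α : ℝ) : Prop :=
  ∀ ε : ℝ, 0 < ε →
    Filter.Tendsto (fun n => netPr e hE N (hne n) (En n)
        {S | IsExpansionOf e hE (En n) S ∧ BalancedIn S p ptau q ys α ε})
      Filter.atTop (nhds 1)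

/-- `p ∧ q` is cofinally satisfiable: for infinitely many `n` some expansion of `T_n`
satisfies both. -/
def CofinallySat2 (e : σ) (hE : ar e = 2) (p q : PLA σ ar) : Prop :=
  ∃ᶠ n in Filter.atTop, ∃ S : Struc σ ar (V n), IsExpansionOf e hE (En n) S ∧
    ∃ β : ℕ → V n, eval S p β = 1 ∧ eval S q β = 1

/-- The closure type `p(x̄,ȳ)` (with `x̄ = xs`, `ȳ = ys`) is ȳ-positive with respect
to the network: for every complete closure type `q(x̄)` such that `p ∧ q` is cofinally
satisfiable, the triple `(p, p↾τ, q)` is `α`-balanced for some `α > 0`. -/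
def PosType (e : σ) (hE : ar e = 2) (N : PLANet σ ar e) (Δ : ℕ)
    (p : PLA σ ar) (xs ys : List ℕ) : Prop :=
  ∀ q : PLA σ ar, IsCompleteClosureType e hE Δ q xs → CofinallySat2 V En e hE p q →
    ∃ ptau, IsTauRestriction e hE Δ p ptau (xs ++ ys) ∧
      ∃ α : ℝ, 0 < α ∧ Balanced V En hne e hE N p ptau q ys α

end Net

/-! ### Convergence testing, continuous and admissible aggregation functions -/

/-- `p` is a convergence testing sequence for parameters `c j` and `al j` (`j < k`):
lengths strictly increase, entries are nonempty sequences, and for every family of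
pairwise disjoint intervals `Iv j ⊆ [0,1]`, open in the induced topology on `[0,1]`,
with `c j ∈ Iv j`, eventually all entries lie in `⋃ j, Iv j` and the proportion of
entries in `Iv j` tends to `al j`. -/
def CTFor (p : ℕ → List unitInterval) {k : ℕ} (c : Fin k → ℝ) (al : Fin k → ℝ) : Prop :=
  (∀ n, p n ≠ []) ∧ (∀ n, (p n).length < (p (n+1)).length) ∧
  ∀ Iv : Fin k → Set ℝ,
    (∀ j, Iv j ⊆ Set.Icc (0:ℝ) 1) → (∀ j, (Iv j).OrdConnected) →
    (∀ j, ∃ U : Set ℝ, IsOpen U ∧ Iv j = U ∩ Set.Icc (0:ℝ) 1) →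
    (Pairwise fun i j => Disjoint (Iv i) (Iv j)) →
    (∀ j, c j ∈ Iv j) →
    (∀ᶠ n in Filter.atTop, ∀ x ∈ p n, (x : ℝ) ∈ ⋃ j, Iv j) ∧
    ∀ j, Filter.Tendsto
      (fun n => (((p n).filter (fun x => decide ((x:ℝ) ∈ Iv j))).length : ℝ) / ((p n).length : ℝ))
      Filter.atTop (nhds (al j))

/-- Convergence-testing sequences of `m`-tuples. -/
def CTForM {m : ℕ} (p : ℕ → Fin m → List unitInterval) (k : Fin m → ℕ)
    (c : ∀ i, Fin (k i) → ℝ) (al : ∀ i, Fin (k i) → ℝ) : Prop :=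
  ∀ i, CTFor (fun n => p n i) (c i) (al i)

/-- `F` is ct-continuous with respect to the given parameters. -/
def CTContinuousAt {m : ℕ} (F : (Fin m → List unitInterval) → unitInterval)
    (k : Fin m → ℕ) (c : ∀ i, Fin (k i) → ℝ) (al : ∀ i, Fin (k i) → ℝ) : Prop :=
  ∀ p q : ℕ → Fin m → List unitInterval, CTForM p k c al → CTForM q k c al →
    Filter.Tendsto (fun n => |(F (p n) : ℝ) - (F (q n) : ℝ)|) Filter.atTop (nhds 0)

/-- `F` is continuous (strongly admissible): ct-continuous for every choice of parameters. -/
def ContinuousAggM {m : ℕ} (F : (Fin m → List unitInterval) → unitInterval) : Prop :=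
  ∀ (k : Fin m → ℕ) (c al : ∀ i, Fin (k i) → ℝ),
    (∀ i j, c i j ∈ Set.Icc (0:ℝ) 1) → (∀ i j, al i j ∈ Set.Icc (0:ℝ) 1) →
    CTContinuousAt F k c al

/-- `F` is admissible: ct-continuous for every choice of parameters with all `al i j > 0`. -/
def AdmissibleAggM {m : ℕ} (F : (Fin m → List unitInterval) → unitInterval) : Prop :=
  ∀ (k : Fin m → ℕ) (c al : ∀ i, Fin (k i) → ℝ),
    (∀ i j, c i j ∈ Set.Icc (0:ℝ) 1) → (∀ i j, al i j ∈ Set.Icc (0:ℝ) 1) →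
    (∀ i j, 0 < al i j) → CTContinuousAt F k c al

end PaperTrees

namespace PaperTrees

section RankAux

variable {σ : Type} {ar : σ → ℕ}

/-- The `E`-relation on indices determined by the atomic type data. -/
def ErelIdx (e : σ) {n : ℕ} (φ : AtomicTypeData σ ar n) : Fin n → Fin n → Prop :=
  fun i j => (⟨e, pairTup e i j⟩ : (R : σ) × (Fin (ar R) → Fin n)) ∈ φ.pos

/-- Index-level closure. -/
def clIdx {n : ℕ} (Er : Fin n → Fin n → Prop) (B : Set (Fin n)) : Set (Fin n) :=
  {i | i ∈ B ∨ (∀ j, ¬ Er j i) ∨ ∃ b ∈ B, Relation.TransGen Er i b}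

lemma pair_eval (e : σ) (hE : ar e = 2) {A : Type} (E0 : A → A → Prop)
    (S : Struc σ ar A) (hexp : IsExpansionOf e hE E0 S) {n : ℕ} (t : Fin n → A)
    (i j : Fin n) : S e (fun s => t (pairTup e i j s)) = true ↔ E0 (t i) (t j) := by
  have h := hexp (fun s => t (pairTup e i j s))
  have h0 : pairTup e i j (Fin.cast hE.symm 0) = i := by
    simp [pairTup]
  have h1 : pairTup e i j (Fin.cast hE.symm 1) = j := by
    simp [pairTup]
  simpa [h0, h1] using h

lemma erel_iff (e : σ) (hE : ar e = 2) {n : ℕ} (φ : AtomicTypeData σ ar n)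
    (hat : ∀ i j : Fin n,
      (⟨e, pairTup e i j⟩ : (R : σ) × (Fin (ar R) → Fin n)) ∈ φ.pos ∨
      (⟨e, pairTup e i j⟩ : (R : σ) × (Fin (ar R) → Fin n)) ∈ φ.neg)
    {A : Type} (E0 : A → A → Prop) (S : Struc σ ar A) (hexp : IsExpansionOf e hE E0 S)
    (t : Fin n → A) (hsat : satAtomic S φ t) (i j : Fin n) :
    E0 (t i) (t j) ↔ ErelIdx e φ i j := by
  constructor
  · intro hE0
    rcases hat i j with h | h
    · exact h
    · have hf : S e (fun s => t (pairTup e i j s)) = false :=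
        hsat.2.1 ⟨e, pairTup e i j⟩ h
      have ht : S e (fun s => t (pairTup e i j s)) = true :=
        (pair_eval e hE E0 S hexp t i j).mpr hE0
      rw [ht] at hf; exact absurd hf (by simp)
  · intro h
    exact (pair_eval e hE E0 S hexp t i j).mp (hsat.1 ⟨e, pairTup e i j⟩ h)

lemma treeCl_image_eq (e : σ) (hE : ar e = 2) {n : ℕ} (φ : AtomicTypeData σ ar n)
    (hat : ∀ i j : Fin n,
      (⟨e, pairTup e i j⟩ : (R : σ) × (Fin (ar R) → Fin n)) ∈ φ.pos ∨
      (⟨e, pairTup e i j⟩ : (R : σ) × (Fin (ar R) → Fin n)) ∈ φ.neg)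
    {A : Type} (E0 : A → A → Prop) (S : Struc σ ar A) (hexp : IsExpansionOf e hE E0 S)
    (t : Fin n → A) (hsat : satAtomic S φ t)
    (hclosed : IsClosedSet E0 (Set.range t)) (B : Set (Fin n)) :
    treeCl E0 (t '' B) = t '' clIdx (ErelIdx e φ) B := by
  have hiff := erel_iff e hE φ hat E0 S hexp t hsat
  have hrange : ∀ x a, a ∈ Set.range t → Ancestor E0 x a → x ∈ Set.range t := by
    intro x a ha hanc
    have hx : x ∈ treeCl E0 (Set.range t) := Or.inr (Or.inr ⟨a, ha, hanc⟩)
    rwa [hclosed] at hx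
  have hanc_idx : ∀ x y, Relation.TransGen E0 x y → ∀ i k, x = t i → y = t k →
      Relation.TransGen (ErelIdx e φ) i k := by
    intro x y h
    induction h with
    | single h =>
      intro i k hx hy
      exact Relation.TransGen.single ((hiff i k).mp (by rw [← hx, ← hy]; exact h))
    | @tail b c h1 h2 ih =>
      intro i k hx hy
      obtain ⟨kb, hb⟩ := hrange b (t k) ⟨k, rfl⟩ (by
        rw [← hy]; exact Relation.TransGen.single h2)
      exact (ih i kb hx hb.symm).tail ((hiff kb k).mp (by rw [hb, ← hy]; exact h2))
  ext a
  constructor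
  · rintro (⟨i, hiB, rfl⟩ | hroot | ⟨b, ⟨k, hkB, rfl⟩, hanc⟩)
    · exact ⟨i, Or.inl hiB, rfl⟩
    · have ha : a ∈ Set.range t := by
        have : a ∈ treeCl E0 (Set.range t) := Or.inr (Or.inl hroot)
        rwa [hclosed] at this
      obtain ⟨i, rfl⟩ := ha
      refine ⟨i, Or.inr (Or.inl fun j hj => ?_), rfl⟩
      exact hroot (t j) ((hiff j i).mpr hj)
    · have ha : a ∈ Set.range t := hrange a (t k) ⟨k, rfl⟩ hanc
      obtain ⟨i, rfl⟩ := ha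
      exact ⟨i, Or.inr (Or.inr ⟨k, hkB, hanc_idx _ _ hanc i k rfl rfl⟩), rfl⟩
  · rintro ⟨i, hi | hi | ⟨k, hkB, htg⟩, rfl⟩
    · exact Or.inl ⟨i, hi, rfl⟩
    · refine Or.inr (Or.inl fun x hx => ?_)
      obtain ⟨j, rfl⟩ := hrange x (t i) ⟨i, rfl⟩ (Relation.TransGen.single hx)
      exact hi j ((hiff j i).mp hx)
    · refine Or.inr (Or.inr ⟨t k, ⟨k, hkB, rfl⟩, ?_⟩)
      exact Relation.TransGen.lift t (fun u v huv => (hiff u v).mpr huv) _ _ htg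

end RankAux

/-- Remark 5.18 / Definition 5.19: the ȳ-rank of a closure type `p(x̄,ȳ)` over τ is well
defined: there is `d ∈ ℕ`, depending only on `p`, such that for every tree `T` (of height
at most `Δ`, realized as the `E`-relation of a σ-structure expanding it) and all tuples
`ā, b̄` with `T ⊨ p(ā,b̄)`, one has `|cl_T(b̄) ∖ cl_T(ā)| = d`. -/
theorem statement_9
    {σ : Type} {ar : σ → ℕ} (e : σ) (hE : ar e = 2) (Δ : ℕ) (hΔ : 0 < Δ)
    (p : PLA σ ar) (xs ys : List ℕ)
    (hp : IsClosureTypeTau e hE Δ p (xs ++ ys)) :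
    ∃ d : ℕ, ∀ (A : Type) (_ : Fintype A) (S : Struc σ ar A) (E0 : A → A → Prop),
      IsTree E0 → HeightLe E0 Δ → IsExpansionOf e hE E0 S →
      ∀ β : ℕ → A, eval S p β = 1 →
        (treeCl E0 (β '' {v | v ∈ ys}) \ treeCl E0 (β '' {v | v ∈ xs})).ncard = d := by
  obtain ⟨hnd, hfv, hsym, m, φ, ⟨hatomic, hclmem, hiffgen⟩, htau⟩ := hp
  refine ⟨(clIdx (ErelIdx e φ)
      {i | ∃ j, i = Fin.castAdd m j ∧ (xs ++ ys).get j ∈ ys} \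
    clIdx (ErelIdx e φ)
      {i | ∃ j, i = Fin.castAdd m j ∧ (xs ++ ys).get j ∈ xs}).ncard, ?_⟩
  intro A _ S E0 hT hH hexp β hev
  obtain ⟨w, hsat, hclosed⟩ := ((hiffgen A _ S E0 hT hH hexp β).2).mp hev
  set t : Fin ((xs ++ ys).length + m) → A := Fin.append (xtuple β (xs ++ ys)) w with ht
  have hinj : Function.Injective t := hsat.2.2
  have himY : β '' {v | v ∈ ys} =
      t '' {i | ∃ j, i = Fin.castAdd m j ∧ (xs ++ ys).get j ∈ ys} := by
    ext a
    constructor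
    · rintro ⟨v, hv, rfl⟩
      obtain ⟨j, hj⟩ := List.mem_iff_get.mp (List.mem_append_right xs hv)
      refine ⟨Fin.castAdd m j, ⟨j, rfl, by rw [hj]; exact hv⟩, ?_⟩
      rw [ht, Fin.append_left]
      exact congrArg β hj
    · rintro ⟨i, ⟨j, rfl, hj⟩, rfl⟩
      exact ⟨(xs ++ ys).get j, hj, by rw [ht, Fin.append_left]; rfl⟩
  have himX : β '' {v | v ∈ xs} =
      t '' {i | ∃ j, i = Fin.castAdd m j ∧ (xs ++ ys).get j ∈ xs} := by
    ext a
    constructor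
    · rintro ⟨v, hv, rfl⟩
      obtain ⟨j, hj⟩ := List.mem_iff_get.mp (List.mem_append_left ys hv)
      refine ⟨Fin.castAdd m j, ⟨j, rfl, by rw [hj]; exact hv⟩, ?_⟩
      rw [ht, Fin.append_left]
      exact congrArg β hj
    · rintro ⟨i, ⟨j, rfl, hj⟩, rfl⟩
      exact ⟨(xs ++ ys).get j, hj, by rw [ht, Fin.append_left]; rfl⟩
  rw [himY, himX,
    treeCl_image_eq e hE φ hatomic.1 E0 S hexp t hsat hclosed
      {i | ∃ j, i = Fin.castAdd m j ∧ (xs ++ ys).get j ∈ ys},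
    treeCl_image_eq e hE φ hatomic.1 E0 S hexp t hsat hclosed
      {i | ∃ j, i = Fin.castAdd m j ∧ (xs ++ ys).get j ∈ xs},
    ← Set.image_diff hinj, Set.ncard_image_of_injective _ hinj]

end PaperTrees
end
end

section
/- Let T = (T_n : n ∈ ℕ⁺) be a sequence of trees satisfying the Assumption on the base sequence of trees. Let T' be any tree of height at least 1. Then for all sufficiently large n the following holds: for every a ∈ T_n, if N_{T_n}(a, T') > 0 then N_{T_n}(a, T') ≥ g₁(n). -/
open Classical Filter
noncomputable section

namespace PaperTrees

section AuxLemmas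

open Relation

private lemma transGen_map' {A B : Type*} {E : A → A → Prop} {E' : B → B → Prop} (f : A → B)
    (h : ∀ x y, E x y → E' (f x) (f y)) {a b : A} (hab : Relation.TransGen E a b) :
    Relation.TransGen E' (f a) (f b) := by
  induction hab with
  | single h1 => exact .single (h _ _ h1)
  | tail _ h1 ih => exact .tail ih (h _ _ h1)

private lemma choose_ge_self' {m k : ℕ} (h1 : 1 ≤ k) (h2 : k < m) : m ≤ m.choose k := by
  induction m generalizing k with
  | zero => omega
  | succ m ih =>
    obtain ⟨j, rfl⟩ : ∃ j, k = j + 1 := ⟨k - 1, by omega⟩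
    rcases eq_or_lt_of_le (Nat.lt_succ_iff.mp h2) with h | hkm
    · rw [h, Nat.choose_succ_self_right]
    · have hih := ih (Nat.le_add_left 1 j) hkm
      have hpos : 0 < m.choose j := Nat.choose_pos (by omega)
      rw [Nat.choose_succ_succ]
      simp only [Nat.succ_eq_add_one] at *
      omega

private lemma isTree_wf {A : Type*} [Finite A] {E : A → A → Prop} (h : IsTree E) :
    WellFounded E := by
  haveI : IsIrrefl A (Relation.TransGen E) := ⟨h.acyclic⟩
  exact Subrelation.wf (fun h' => Relation.TransGen.single h')
    (Finite.wellFounded_of_trans_of_irrefl _)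

private lemma root_reaches {A : Type*} [Finite A] {E : A → A → Prop} (hT : IsTree E)
    {r : A} (hr : IsRoot E r) : ∀ b : A, b ≠ r → Relation.TransGen E r b := by
  intro b
  refine (isTree_wf hT).induction
    (C := fun b => b ≠ r → Relation.TransGen E r b) b ?_
  intro x ih hx
  have hnr : ¬ IsRoot E x := fun h => hx (hT.root_unique.unique h hr)
  obtain ⟨c, hc, -⟩ := hT.parent_unique x hnr
  by_cases hcr : c = r
  · exact .single (hcr ▸ hc)
  · exact .tail (ih c hc hcr) hc

private lemma relIso'_isTree {A B : Type*} {E : A → A → Prop} {E' : B → B → Prop}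
    (f : A ≃ B) (hf : ∀ x y, E x y ↔ E' (f x) (f y)) (h : IsTree E') : IsTree E := by
  constructor
  · intro a b hab
    have h2 := h.asymm _ _ ((hf a b).mp hab)
    exact ⟨fun e => h2.1 (congrArg f e), fun e => h2.2 ((hf b a).mp e)⟩
  · obtain ⟨r, hr, hu⟩ := h.root_unique
    refine ⟨f.symm r, ?_, ?_⟩
    · intro x hx
      have := (hf x (f.symm r)).mp hx
      rw [Equiv.apply_symm_apply] at this
      exact hr (f x) this
    · intro y hy
      have hy' : IsRoot E' (f y) := by
        intro x hx
        exact hy (f.symm x) ((hf _ _).mpr (by simpa using hx))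
      rw [← hu _ hy', Equiv.symm_apply_apply]
  · intro a ha
    have ha' : ¬ IsRoot E' (f a) := by
      intro h'
      exact ha (fun x hx => h' (f x) ((hf x a).mp hx))
    obtain ⟨b, hb, hu⟩ := h.parent_unique (f a) ha'
    refine ⟨f.symm b, (hf _ _).mpr (by simpa using hb), fun y hy => ?_⟩
    rw [← hu (f y) ((hf y a).mp hy), Equiv.symm_apply_apply]
  · intro a hc
    exact h.acyclic (f a) (transGen_map' f (fun x y => (hf x y).mp) hc)

/-- The function replacing the part `K'` of `(S \ K) ∪ K'` by `K` via `χ`. -/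
private noncomputable def swapFun {α : Type*} {S K K' : Set α} (hK : K ⊆ S) (χ : ↥K' ≃ ↥K) :
    ↥((S \ K) ∪ K') → ↥S := fun u =>
  if h : (u : α) ∈ K' then ⟨(χ ⟨u, h⟩ : α), hK (χ ⟨u, h⟩).2⟩
  else ⟨u, (((Set.mem_union _ _ _).mp u.2).elim (fun h' => h'.1) (fun h' => absurd h' h))⟩

private lemma swapFun_mem {α : Type*} {S K K' : Set α} (hK : K ⊆ S) (χ : ↥K' ≃ ↥K)
    (u : ↥((S \ K) ∪ K')) (hu : (u : α) ∈ K') : (swapFun hK χ u : α) ∈ K := by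
  simp only [swapFun, dif_pos hu]
  exact (χ ⟨u, hu⟩).2

private lemma swapFun_id {α : Type*} {S K K' : Set α} (hK : K ⊆ S) (χ : ↥K' ≃ ↥K)
    (u : ↥((S \ K) ∪ K')) (hu : (u : α) ∉ K') : (swapFun hK χ u : α) = u := by
  simp only [swapFun, dif_neg hu]

private lemma swapFun_bijective {α : Type*} {S K K' : Set α} (hK : K ⊆ S)
    (hd : Disjoint (S \ K) K') (χ : ↥K' ≃ ↥K) : Function.Bijective (swapFun hK χ) := by
  constructor
  · intro u v huv
    by_cases hu : (u : α) ∈ K' <;> by_cases hv : (v : α) ∈ K'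
    · have h1 : (swapFun hK χ u : α) = (χ ⟨u, hu⟩ : α) := by
        simp only [swapFun, dif_pos hu]
      have h2 : (swapFun hK χ v : α) = (χ ⟨v, hv⟩ : α) := by
        simp only [swapFun, dif_pos hv]
      have : (χ ⟨u, hu⟩ : α) = (χ ⟨v, hv⟩ : α) := by
        rw [← h1, ← h2, huv]
      have h3 := χ.injective (Subtype.ext this)
      exact Subtype.ext (congrArg (Subtype.val : ↥K' → α) h3)
    · exfalso
      have h1 := swapFun_mem hK χ u hu
      have h2 := swapFun_id hK χ v hv
      rw [huv, h2] at h1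
      have hvS : (v : α) ∈ S \ K :=
        ((Set.mem_union _ _ _).mp v.2).elim id (fun h' => absurd h' hv)
      exact hvS.2 h1
    · exfalso
      have h1 := swapFun_mem hK χ v hv
      have h2 := swapFun_id hK χ u hu
      rw [← huv, h2] at h1
      have huS : (u : α) ∈ S \ K :=
        ((Set.mem_union _ _ _).mp u.2).elim id (fun h' => absurd h' hu)
      exact huS.2 h1
    · have h1 := swapFun_id hK χ u hu
      have h2 := swapFun_id hK χ v hv
      apply Subtype.ext
      rw [← h1, ← h2, huv]
  · intro y
    by_cases hy : (y : α) ∈ K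
    · have hmem : ((χ.symm ⟨y, hy⟩ : ↥K') : α) ∈ (S \ K) ∪ K' :=
        Or.inr (χ.symm ⟨y, hy⟩).2
      refine ⟨⟨_, hmem⟩, ?_⟩
      have hin : ((⟨_, hmem⟩ : ↥((S \ K) ∪ K')) : α) ∈ K' := (χ.symm ⟨y, hy⟩).2
      apply Subtype.ext
      have : (swapFun hK χ ⟨_, hmem⟩ : α) = (χ ⟨_, hin⟩ : α) := by
        simp only [swapFun, dif_pos hin]
      rw [this]
      have : (⟨_, hin⟩ : ↥K') = χ.symm ⟨y, hy⟩ := Subtype.ext rfl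
      rw [this, Equiv.apply_symm_apply]
    · have hyS : (y : α) ∈ S \ K := ⟨y.2, hy⟩
      have hmem : (y : α) ∈ (S \ K) ∪ K' := Or.inl hyS
      refine ⟨⟨y, hmem⟩, ?_⟩
      have hnot : ((⟨(y : α), hmem⟩ : ↥((S \ K) ∪ K')) : α) ∉ K' :=
        fun h => Set.disjoint_left.mp hd hyS h
      exact Subtype.ext (swapFun_id hK χ _ hnot)

end AuxLemmas

/-- Remark 5.2 (ii): under Assumption 6.4 on the base sequence of trees, for every tree
`T'` of height at least 1, for all sufficiently large `n`: every `a ∈ T_n` with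
`N_{T_n}(a,T') > 0` satisfies `N_{T_n}(a,T') ≥ g₁(n)`. -/
theorem statement_15
    (V : ℕ → Type) [∀ n, Fintype (V n)]
    (En : ∀ n, V n → V n → Prop)
    (Δ : ℕ) (g1 g2 g3 g4 : ℕ → ℝ)
    (hT : TreeSeqAssumption V En Δ g1 g2 g3 g4)
    (B : Type) [Fintype B] (E' : B → B → Prop) (hB : IsTree E')
    (hh : ∃ h, 1 ≤ h ∧ HasHeight E' h) :
    ∀ᶠ n in Filter.atTop, ∀ a : V n,
      0 < NT (En n) E' a → g1 n ≤ (NT (En n) E' a : ℝ) := by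
  filter_upwards [hT.g1_infty.eventually_ge_atTop ((Fintype.card B : ℝ) + 1)] with n hn
  intro a hNT
  set E := En n with hE
  have hTree : IsTree E := hT.tree n
  -- the set counted by NT
  set Target : Set (Set (V n)) :=
    {S : Set (V n) | IsSubtreeRootedAt E S a ∧ RelIso' (InducedRel E S) E'} with hTarget
  have hNTdef : NT E E' a = Target.ncard := rfl
  obtain ⟨S₀, hS₀mem⟩ : Target.Nonempty := by
    apply Set.nonempty_of_ncard_ne_zero
    rw [← hNTdef]; exact hNT.ne'
  obtain ⟨⟨⟨haS, hroot⟩, hTree₀⟩, e, he⟩ := hS₀mem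
  -- there is an edge inside S₀
  obtain ⟨h, hh1, ⟨⟨bh, hbh⟩, -⟩⟩ := hh
  obtain ⟨h', rfl⟩ : ∃ h'', h = h'' + 1 := ⟨h - 1, by omega⟩
  obtain ⟨ch, -, hedge'⟩ := hbh
  have hexedge : ∃ u v : ↥S₀, E u.val v.val := by
    refine ⟨e.symm ch, e.symm bh, ?_⟩
    have := (he (e.symm ch) (e.symm bh)).mpr (by simpa using hedge')
    exact this
  -- a deepest internal node p of S₀
  set D : Set (V n) := {q | q ∈ S₀ ∧ ∃ c ∈ S₀, E q c} with hD
  have hDne : D.Nonempty := by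
    obtain ⟨u, v, huv⟩ := hexedge
    exact ⟨u.val, u.2, v.val, v.2, huv⟩
  have wfF : WellFounded (flip (Relation.TransGen E)) := by
    haveI : IsIrrefl (V n) (flip (Relation.TransGen E)) := ⟨hTree.acyclic⟩
    haveI : IsTrans (V n) (flip (Relation.TransGen E)) :=
      ⟨fun _ _ _ h1 h2 => Relation.TransGen.trans h2 h1⟩
    exact Finite.wellFounded_of_trans_of_irrefl _
  obtain ⟨p, hpD, hpmax⟩ := wfF.has_min D hDne
  have hpS₀ : p ∈ S₀ := hpD.1
  obtain ⟨x, hxS₀, hpx⟩ := hpD.2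
  -- children of p in S₀ have no S₀-children
  have hKleaf : ∀ c, E p c → c ∈ S₀ → ∀ z, z ∈ S₀ → ¬ E c z := by
    intro c hpc hcS z hzS hcz
    exact hpmax c ⟨hcS, z, hzS, hcz⟩ (Relation.TransGen.single hpc)
  set C : Set (V n) := childSet E p with hC
  set K : Set (V n) := C ∩ S₀ with hK
  have hxK : x ∈ K := ⟨hpx, hxS₀⟩
  have hnl : ¬ IsLeaf E p := fun h => h x hpx
  set m : ℕ := C.ncard with hmdef
  set k : ℕ := K.ncard with hkdef
  have hm : g1 n ≤ (m : ℝ) := hT.child_lb n p hnl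
  have hk1 : 1 ≤ k := (Set.ncard_pos (Set.toFinite K)).mpr ⟨x, hxK⟩
  have hS₀card : S₀.ncard = Fintype.card B := by
    rw [← Nat.card_coe_set_eq, Nat.card_congr e, Nat.card_eq_fintype_card]
  have hkB : k ≤ Fintype.card B := by
    rw [← hS₀card]
    exact Set.ncard_le_ncard Set.inter_subset_right (Set.toFinite _)
  have hBm : Fintype.card B + 1 ≤ m := by
    have : ((Fintype.card B : ℝ) + 1) ≤ (m : ℝ) := le_trans hn hm
    exact_mod_cast this
  have hkm : k < m := by omega
  have hpnotC : p ∉ C := fun h => (hTree.asymm p p h).1 rfl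
  have haK : a ∉ K := fun hk => hroot ⟨p, hpS₀⟩ hk.1
  -- parent uniqueness in E
  have huniq : ∀ v u u' : V n, E u v → E u' v → u = u' := by
    intro v u u' huv hu'v
    have hnr : ¬ IsRoot E v := fun h => h u huv
    exact (hTree.parent_unique v hnr).unique huv hu'v
  -- a reaches p or equals p
  have hap : p = a ∨ Relation.TransGen E a p := by
    by_cases hpa : p = a
    · exact Or.inl hpa
    · right
      have hsub : (⟨p, hpS₀⟩ : ↥S₀) ≠ ⟨a, haS⟩ := fun h => hpa (congrArg Subtype.val h)
      have := root_reaches hTree₀ hroot ⟨p, hpS₀⟩ hsub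
      exact transGen_map' Subtype.val (fun _ _ h => h) this
  have hnotEa : ∀ u, E p u → ¬ E u a := by
    intro u hpu hua
    apply hTree.acyclic a
    rcases hap with rfl | hap'
    · exact (Relation.TransGen.single hpu).tail hua
    · exact (hap'.tail hpu).tail hua
  -- uniqueness of root in S₀
  have hrootU : ∀ (z : ↥S₀), IsRoot (InducedRel E S₀) z → z = ⟨a, haS⟩ := fun z hz =>
    hTree₀.root_unique.unique hz hroot
  have hKsubS₀ : K ⊆ S₀ := Set.inter_subset_right
  -- the family of swapped subtrees
  set CF : Finset (V n) := (Set.toFinite C).toFinset with hCF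
  have hCFcoe : (CF : Set (V n)) = C := Set.Finite.coe_toFinset _
  have hCFcard : CF.card = m := by
    rw [hmdef, Set.ncard_eq_toFinset_card C (Set.toFinite C)]
  set F : Finset (V n) → Set (V n) := fun Kf => (S₀ \ K) ∪ ↑Kf with hF
  set Dom : Finset (Finset (V n)) := Finset.powersetCard k CF with hDom
  have hDomcard : Dom.card = m.choose k := by
    rw [hDom, Finset.card_powersetCard, hCFcard]
  -- main construction
  have hmem : ∀ Kf ∈ Dom, F Kf ∈ Target := by
    intro Kf hKf
    rw [hDom, Finset.mem_powersetCard] at hKf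
    obtain ⟨hKfsub, hKfcard⟩ := hKf
    set K' : Set (V n) := ↑Kf with hK'
    have hK'C : K' ⊆ C := by
      rw [hK', ← hCFcoe]; exact_mod_cast hKfsub
    have hK'card : K'.ncard = k := by rw [hK', Set.ncard_coe_finset, hKfcard]
    have hd1 : Disjoint (S₀ \ K) K' := by
      rw [Set.disjoint_left]
      rintro z ⟨hzS, hzK⟩ hzK'
      exact hzK ⟨hK'C hzK', hzS⟩
    have hFK : F Kf = (S₀ \ K) ∪ K' := rfl
    -- an equivalence K' ≃ K
    obtain ⟨χ⟩ : Nonempty (↥K' ≃ ↥K) := by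
      apply Finite.card_eq.mp
      rw [Nat.card_coe_set_eq, Nat.card_coe_set_eq, hK'card, hkdef]
    -- the bijection F Kf ≃ S₀
    set ψ : ↥((S₀ \ K) ∪ K') ≃ ↥S₀ :=
      Equiv.ofBijective (swapFun hKsubS₀ χ) (swapFun_bijective hKsubS₀ hd1 χ) with hψ
    have hψ2 : ∀ u : ↥((S₀ \ K) ∪ K'), (u : V n) ∈ K' → ((ψ u : ↥S₀) : V n) ∈ K :=
      fun u hu => swapFun_mem hKsubS₀ χ u hu
    have hψ1 : ∀ u : ↥((S₀ \ K) ∪ K'), (u : V n) ∉ K' → ((ψ u : ↥S₀) : V n) = u :=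
      fun u hu => swapFun_id hKsubS₀ χ u hu
    -- edge preservation
    have hpres : ∀ u v : ↥((S₀ \ K) ∪ K'),
        InducedRel E ((S₀ \ K) ∪ K') u v ↔ InducedRel E S₀ (ψ u) (ψ v) := by
      intro u v
      show E u.val v.val ↔ E (ψ u).val (ψ v).val
      have humem : u.val ∈ S₀ \ K ∨ u.val ∈ K' := (Set.mem_union _ _ _).mp u.2
      have hvmem : v.val ∈ S₀ \ K ∨ v.val ∈ K' := (Set.mem_union _ _ _).mp v.2
      by_cases hu : u.val ∈ K' <;> by_cases hv : v.val ∈ K'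
      · -- both in K' : both sides false
        have hvC : v.val ∈ C := hK'C hv
        have huC : u.val ∈ C := hK'C hu
        have h1 := hψ2 u hu
        have h2 := hψ2 v hv
        constructor
        · intro hedge
          exact absurd (huniq v.val u.val p hedge hvC) (fun h => hpnotC (h ▸ huC))
        · intro hedge
          exact absurd (huniq (ψ v).val (ψ u).val p hedge h2.1)
            (fun h => hpnotC (h ▸ h1.1))
      · -- u ∈ K', v ∈ S₀ \ K : both sides false
        have hvS : v.val ∈ S₀ \ K := hvmem.elim id (fun h' => absurd h' hv)
        have huC : u.val ∈ C := hK'C hu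
        have h1 := hψ2 u hu
        constructor
        · intro hedge
          exfalso
          by_cases huS : u.val ∈ S₀
          · exact hKleaf u.val huC huS v.val hvS.1 hedge
          · -- v is a root of S₀, hence v = a, contradiction
            have hvroot : IsRoot (InducedRel E S₀) ⟨v.val, hvS.1⟩ := by
              intro z hz
              have : z.val = u.val := huniq v.val z.val u.val hz hedge
              exact huS (this ▸ z.2)
            have hva : v.val = a := congrArg Subtype.val (hrootU _ hvroot)
            apply hnotEa u.val huC
            rw [← hva]; exact hedge
        · intro hedge
          exfalso
          rw [hψ1 v hv] at hedge
          exact hKleaf (ψ u).val h1.1 h1.2 v.val hvS.1 hedge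
      · -- u ∈ S₀ \ K, v ∈ K' : both sides iff u = p
        have hvC : v.val ∈ C := hK'C hv
        have h2 := hψ2 v hv
        rw [hψ1 u hu]
        constructor
        · intro hedge
          have : u.val = p := huniq v.val u.val p hedge hvC
          rw [this]; exact h2.1
        · intro hedge
          have : u.val = p := huniq (ψ v).val u.val p hedge h2.1
          rw [this]; exact hvC
      · -- both in S₀ \ K
        rw [hψ1 u hu, hψ1 v hv]
    -- now assemble
    have hiso : ∀ x y : ↥((S₀ \ K) ∪ K'),
        InducedRel E ((S₀ \ K) ∪ K') x y ↔ E' ((ψ.trans e) x) ((ψ.trans e) y) := by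
      intro x y
      rw [hpres x y]
      exact he _ _
    have htree' : IsTree (InducedRel E ((S₀ \ K) ∪ K')) := relIso'_isTree (ψ.trans e) hiso hB
    have haF : a ∈ (S₀ \ K) ∪ K' := Or.inl ⟨haS, haK⟩
    have hrootF : IsRoot (InducedRel E ((S₀ \ K) ∪ K')) ⟨a, haF⟩ := by
      intro z hz
      have hz' : E z.val a := hz
      rcases (Set.mem_union _ _ _).mp z.2 with h' | h'
      · exact hroot ⟨z.val, h'.1⟩ hz'
      · exact hnotEa z.val (hK'C h') hz'
    exact ⟨⟨⟨haF, hrootF⟩, htree'⟩, ⟨ψ.trans e, hiso⟩⟩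
  -- injectivity
  have hrecover : ∀ Kf ∈ Dom, F Kf ∩ C = ↑Kf := by
    intro Kf hKf
    rw [hDom, Finset.mem_powersetCard] at hKf
    have hKfC : (↑Kf : Set (V n)) ⊆ C := by
      rw [← hCFcoe]; exact_mod_cast hKf.1
    apply Set.Subset.antisymm
    · rintro z ⟨hz1, hz2⟩
      rcases hz1 with h' | h'
      · exact absurd ⟨hz2, h'.1⟩ h'.2
      · exact h'
    · intro z hz
      exact ⟨Or.inr hz, hKfC hz⟩
  have hinj : Set.InjOn F ↑Dom := by
    intro Kf1 h1 Kf2 h2 heq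
    have e1 := hrecover Kf1 h1
    have e2 := hrecover Kf2 h2
    rw [heq] at e1
    rw [e2] at e1
    exact (Finset.coe_injective e1).symm
  -- counting
  have himg : F '' ↑Dom ⊆ Target := by
    rintro _ ⟨Kf, hKf, rfl⟩
    exact hmem Kf hKf
  have hcount : m.choose k ≤ Target.ncard := by
    calc m.choose k = Dom.card := hDomcard.symm
      _ = (↑Dom : Set (Finset (V n))).ncard := (Set.ncard_coe_finset _).symm
      _ = (F '' ↑Dom).ncard := (Set.ncard_image_of_injOn hinj).symm
      _ ≤ Target.ncard := Set.ncard_le_ncard himg (Set.toFinite _)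
  have hchain : m ≤ NT E E' a := by
    rw [hNTdef]
    exact le_trans (choose_ge_self' hk1 hkm) hcount
  calc g1 n ≤ (m : ℝ) := hm
    _ ≤ (NT E E' a : ℝ) := by exact_mod_cast hchain

end PaperTrees
end
end
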